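/- Let x⁰ ∈ ℝ^m have support I with IC(x⁰) < 1, let y = Ax⁰ + b with ‖b‖₂ ≤ ε, and let x⋆ minimize ‖x‖₁ subject to ‖Ax − y‖₂ ≤ ε. Then ‖x⋆ − x⁰‖₂ ≤ 2ε ( √(‖(A_IᵗA_I)⁻¹‖₂) + (‖d(x⁰)‖₂/(1 − IC(x⁰))) ( √(‖(A_IᵗA_I)⁻¹‖₂) · ‖A_{I^c}‖_{1→2} + 1 ) ). -/

import Mathlib

open Finset Matrix

/-- ℓ¹ norm of a finitely-indexed real vector. -/
noncomputable def l1 {ι : Type*} [Fintype ι] (x : ι → ℝ) : ℝ := ∑ i, |x i|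

/-- ℓ² (Euclidean) norm. -/
noncomputable def l2 {ι : Type*} [Fintype ι] (x : ι → ℝ) : ℝ := Real.sqrt (∑ i, (x i) ^ 2)

/-- ℓ^∞ norm. -/
noncomputable def linf {ι : Type*} [Fintype ι] (x : ι → ℝ) : ℝ := sSup {y | ∃ i, y = |x i|}

/-- Operator norm induced by the Euclidean norms (spectral norm). -/
noncomputable def opNorm2 {ι κ : Type*} [Fintype ι] [Fintype κ] (M : Matrix ι κ ℝ) : ℝ :=
  sSup {y | ∃ x : κ → ℝ, l2 x ≤ 1 ∧ y = l2 (M.mulVec x)}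

/-- Operator norm from ℓ¹ to ℓ². -/
noncomputable def norm12 {ι κ : Type*} [Fintype ι] [Fintype κ] (M : Matrix ι κ ℝ) : ℝ :=
  sSup {y | ∃ x : κ → ℝ, x ≠ 0 ∧ y = l2 (M.mulVec x) / l1 x}

/-- Submatrix of the columns of `A` indexed by `I`. -/
def colSub {n m : ℕ} (A : Matrix (Fin n) (Fin m) ℝ) (I : Finset (Fin m)) :
    Matrix (Fin n) {j // j ∈ I} ℝ := fun i j => A i j

/-- The Gram matrix `A_Iᵗ A_I`. -/
def gram {n m : ℕ} (A : Matrix (Fin n) (Fin m) ℝ) (I : Finset (Fin m)) :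
    Matrix {j // j ∈ I} {j // j ∈ I} ℝ := (colSub A I)ᵀ * colSub A I

/-- The sign vector of `x` restricted to `I`. -/
noncomputable def signI {m : ℕ} (x : Fin m → ℝ) (I : Finset (Fin m)) : {j // j ∈ I} → ℝ :=
  fun j => Real.sign (x j)

/-- The vector `d(x) = A_I (A_IᵗA_I)⁻¹ sign(x_I)`. -/
noncomputable def dvec {n m : ℕ} (A : Matrix (Fin n) (Fin m) ℝ) (I : Finset (Fin m))
    (x : Fin m → ℝ) : Fin n → ℝ :=
  (colSub A I).mulVec ((gram A I)⁻¹.mulVec (signI x I))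

/-- The identification coefficient `IC(x) = max_{j ∉ I} |a_jᵗ d(x)|`. -/
noncomputable def IC {n m : ℕ} (A : Matrix (Fin n) (Fin m) ℝ) (I : Finset (Fin m))
    (x : Fin m → ℝ) : ℝ :=
  sSup {y | ∃ j ∉ I, y = |∑ i, A i j * dvec A I x i|}

/-- Restriction of `x` to `I`, extended by zero. -/
def restr {m : ℕ} (I : Finset (Fin m)) (x : Fin m → ℝ) : Fin m → ℝ :=
  fun i => if i ∈ I then x i else 0

variable {ι κ : Type*} [Fintype ι] [Fintype κ]

lemma l2_eq_norm (x : ι → ℝ) : l2 x = ‖(WithLp.equiv 2 (ι → ℝ)).symm x‖ := by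
  rw [EuclideanSpace.norm_eq]
  simp [l2, sq_abs]

lemma l2_nonneg (x : ι → ℝ) : 0 ≤ l2 x := Real.sqrt_nonneg _

lemma l2_zero : l2 (0 : ι → ℝ) = 0 := by simp [l2]

lemma sq_l2 (x : ι → ℝ) : l2 x ^ 2 = ∑ i, x i ^ 2 :=
  Real.sq_sqrt (Finset.sum_nonneg fun i _ => sq_nonneg _)

lemma l2_smul (c : ℝ) (x : ι → ℝ) : l2 (c • x) = |c| * l2 x := by
  simp only [l2, Pi.smul_apply, smul_eq_mul, mul_pow, ← Finset.mul_sum]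
  rw [Real.sqrt_mul (sq_nonneg c), Real.sqrt_sq_eq_abs]

lemma l2_add_le (x y : ι → ℝ) : l2 (x + y) ≤ l2 x + l2 y := by
  simp only [l2_eq_norm]
  rw [show (WithLp.equiv 2 (ι → ℝ)).symm (x + y)
      = (WithLp.equiv 2 (ι → ℝ)).symm x + (WithLp.equiv 2 (ι → ℝ)).symm y from rfl]
  exact norm_add_le _ _

lemma cs_abs (x y : ι → ℝ) : |∑ i, x i * y i| ≤ l2 x * l2 y := by
  have h := abs_real_inner_le_norm ((WithLp.equiv 2 (ι → ℝ)).symm x) ((WithLp.equiv 2 (ι → ℝ)).symm y)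
  rw [← l2_eq_norm, ← l2_eq_norm] at h
  simpa [PiLp.inner_apply, RCLike.inner_apply, conj_trivial, mul_comm] using h

lemma l1_nonneg (x : ι → ℝ) : 0 ≤ l1 x := Finset.sum_nonneg fun i _ => abs_nonneg _

lemma l1_zero : l1 (0 : ι → ℝ) = 0 := by simp [l1]

lemma l1_pos {x : ι → ℝ} (hx : x ≠ 0) : 0 < l1 x := by
  rcases (l1_nonneg x).lt_or_eq with h | h
  · exact h
  · exfalso; apply hx; funext i
    have := (Finset.sum_eq_zero_iff_of_nonneg (fun i _ => abs_nonneg (x i))).1 h.symm i (Finset.mem_univ i)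
    simpa using this

lemma l2_le_l1 (x : ι → ℝ) : l2 x ≤ l1 x := by
  have h : ∑ i, x i ^ 2 ≤ (∑ i, |x i|) ^ 2 := by
    calc ∑ i, x i ^ 2 = ∑ i, |x i| ^ 2 := by simp [sq_abs]
    _ ≤ (∑ i, |x i|) ^ 2 := Finset.sum_sq_le_sq_sum_of_nonneg (fun i _ => abs_nonneg _)
  calc l2 x ≤ Real.sqrt ((∑ i, |x i|) ^ 2) := Real.sqrt_le_sqrt h
  _ = l1 x := Real.sqrt_sq (l1_nonneg x)

noncomputable def frob (M : Matrix ι κ ℝ) : ℝ := Real.sqrt (∑ i, ∑ j, M i j ^ 2)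

lemma frob_nonneg (M : Matrix ι κ ℝ) : 0 ≤ frob M := Real.sqrt_nonneg _

lemma l2_mulVec_le_frob (M : Matrix ι κ ℝ) (x : κ → ℝ) :
    l2 (M.mulVec x) ≤ frob M * l2 x := by
  have key : ∑ i, (M.mulVec x i) ^ 2 ≤ (∑ i, ∑ j, M i j ^ 2) * l2 x ^ 2 := by
    rw [Finset.sum_mul]
    refine Finset.sum_le_sum fun i _ => ?_
    have h1 : |M.mulVec x i| ≤ l2 (fun j => M i j) * l2 x := by
      simpa [Matrix.mulVec, dotProduct] using cs_abs (fun j => M i j) x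
    calc (M.mulVec x i) ^ 2 = |M.mulVec x i| ^ 2 := (sq_abs _).symm
    _ ≤ (l2 (fun j => M i j) * l2 x) ^ 2 := by
        exact pow_le_pow_left₀ (abs_nonneg _) h1 2
    _ = (∑ j, M i j ^ 2) * l2 x ^ 2 := by rw [mul_pow, sq_l2]
  calc l2 (M.mulVec x) = Real.sqrt (∑ i, (M.mulVec x i) ^ 2) := rfl
  _ ≤ Real.sqrt ((∑ i, ∑ j, M i j ^ 2) * l2 x ^ 2) := Real.sqrt_le_sqrt key
  _ = frob M * l2 x := by
      rw [Real.sqrt_mul' _ (sq_nonneg (l2 x)),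
        Real.sqrt_sq (l2_nonneg x)]; rfl

lemma opNorm2_bddAbove (M : Matrix ι κ ℝ) :
    BddAbove {y | ∃ x : κ → ℝ, l2 x ≤ 1 ∧ y = l2 (M.mulVec x)} := by
  refine ⟨frob M, fun y hy => ?_⟩
  obtain ⟨x, hx, rfl⟩ := hy
  calc l2 (M.mulVec x) ≤ frob M * l2 x := l2_mulVec_le_frob M x
  _ ≤ frob M * 1 := by exact mul_le_mul_of_nonneg_left hx (frob_nonneg M)
  _ = frob M := mul_one _

lemma opNorm2_nonneg (M : Matrix ι κ ℝ) : 0 ≤ opNorm2 M := by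
  refine le_csSup (opNorm2_bddAbove M) ?_
  exact ⟨0, by simp [l2_zero], by simp [l2_zero]⟩

lemma l2_eq_zero {x : ι → ℝ} (h : l2 x = 0) : x = 0 := by
  have h2 : ∑ i, x i ^ 2 = 0 := by rw [← sq_l2, h]; ring
  funext i
  have := (Finset.sum_eq_zero_iff_of_nonneg (fun i _ => sq_nonneg (x i))).1 h2 i (Finset.mem_univ i)
  simpa [pow_eq_zero_iff] using this

lemma l2_mulVec_le_opNorm2 (M : Matrix ι κ ℝ) (x : κ → ℝ) :
    l2 (M.mulVec x) ≤ opNorm2 M * l2 x := by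
  by_cases hx : x = 0
  · simp [hx, Matrix.mulVec_zero, l2_zero]
  · have hpos : 0 < l2 x := by
      rcases (l2_nonneg x).lt_or_eq with h | h
      · exact h
      · exact absurd (l2_eq_zero h.symm) hx
    set u : κ → ℝ := (l2 x)⁻¹ • x with hu
    have hlu : l2 u = 1 := by
      rw [hu, l2_smul, abs_of_nonneg (inv_nonneg.2 hpos.le), inv_mul_cancel₀ hpos.ne']
    have hmem : l2 (M.mulVec u) ∈ {y | ∃ x : κ → ℝ, l2 x ≤ 1 ∧ y = l2 (M.mulVec x)} :=
      ⟨u, hlu.le, rfl⟩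
    have hle : l2 (M.mulVec u) ≤ opNorm2 M := le_csSup (opNorm2_bddAbove M) hmem
    have hMu : M.mulVec u = (l2 x)⁻¹ • M.mulVec x := by
      rw [hu]; exact M.mulVec_smul _ x
    rw [hMu, l2_smul, abs_of_nonneg (inv_nonneg.2 hpos.le)] at hle
    calc l2 (M.mulVec x) = l2 x * ((l2 x)⁻¹ * l2 (M.mulVec x)) := by
          field_simp
    _ ≤ l2 x * opNorm2 M := mul_le_mul_of_nonneg_left hle hpos.le
    _ = opNorm2 M * l2 x := mul_comm _ _

lemma norm12_bddAbove (M : Matrix ι κ ℝ) :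
    BddAbove {y | ∃ x : κ → ℝ, x ≠ 0 ∧ y = l2 (M.mulVec x) / l1 x} := by
  refine ⟨frob M, fun y hy => ?_⟩
  obtain ⟨x, hx, rfl⟩ := hy
  rw [div_le_iff₀ (l1_pos hx)]
  calc l2 (M.mulVec x) ≤ frob M * l2 x := l2_mulVec_le_frob M x
  _ ≤ frob M * l1 x := mul_le_mul_of_nonneg_left (l2_le_l1 x) (frob_nonneg M)

lemma norm12_nonneg (M : Matrix ι κ ℝ) : 0 ≤ norm12 M := by
  rcases Set.eq_empty_or_nonempty {y | ∃ x : κ → ℝ, x ≠ 0 ∧ y = l2 (M.mulVec x) / l1 x} with h | h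
  · rw [norm12, h, Real.sSup_empty]
  · obtain ⟨y, x, hx, hy⟩ := h
    refine le_trans (show (0:ℝ) ≤ y by rw [hy]; exact div_nonneg (l2_nonneg _) (l1_nonneg _)) ?_
    exact le_csSup (norm12_bddAbove M) ⟨x, hx, hy⟩

lemma l2_mulVec_le_norm12 (M : Matrix ι κ ℝ) (x : κ → ℝ) :
    l2 (M.mulVec x) ≤ norm12 M * l1 x := by
  by_cases hx : x = 0
  · simp [hx, Matrix.mulVec_zero, l2_zero, l1_zero]
  · have h1 : l2 (M.mulVec x) / l1 x ≤ norm12 M := le_csSup (norm12_bddAbove M) ⟨x, hx, rfl⟩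
    rw [div_le_iff₀ (l1_pos hx)] at h1
    exact h1

lemma psd_cs (P : Matrix κ κ ℝ) (hsym : Pᵀ = P)
    (hpsd : ∀ x : κ → ℝ, 0 ≤ x ⬝ᵥ P.mulVec x) (x y : κ → ℝ) :
    (x ⬝ᵥ P.mulVec y) ^ 2 ≤ (x ⬝ᵥ P.mulVec x) * (y ⬝ᵥ P.mulVec y) := by
  have hswap : ∀ u v : κ → ℝ, u ⬝ᵥ P.mulVec v = v ⬝ᵥ P.mulVec u := by
    intro u v
    rw [Matrix.dotProduct_mulVec, ← Matrix.mulVec_transpose, hsym, dotProduct_comm]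
  have key : ∀ t : ℝ, 0 ≤ (y ⬝ᵥ P.mulVec y) * (t * t) + (2 * (x ⬝ᵥ P.mulVec y)) * t
      + (x ⬝ᵥ P.mulVec x) := by
    intro t
    have h := hpsd (x + t • y)
    have hexp : (x + t • y) ⬝ᵥ P.mulVec (x + t • y)
        = (y ⬝ᵥ P.mulVec y) * (t * t) + (2 * (x ⬝ᵥ P.mulVec y)) * t + (x ⬝ᵥ P.mulVec x) := by
      simp only [Matrix.mulVec_add, Matrix.mulVec_smul, add_dotProduct,
        dotProduct_add, smul_dotProduct, dotProduct_smul,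
        smul_eq_mul, hswap y x]
      ring
    rw [hexp] at h
    exact h
  have hd := discrim_le_zero key
  rw [discrim] at hd
  nlinarith [hd]

lemma dot_self_eq_sq_l2 (x : κ → ℝ) : x ⬝ᵥ x = l2 x ^ 2 := by
  rw [sq_l2]
  simp [dotProduct, pow_two]

lemma dot_le_l2 (x y : κ → ℝ) : x ⬝ᵥ y ≤ l2 x * l2 y :=
  le_trans (le_abs_self _) (by simpa [dotProduct] using cs_abs x y)

lemma spec_bound (B : Matrix ι κ ℝ) [DecidableEq κ] (hinv : IsUnit (Bᵀ * B).det) (v : ι → ℝ) :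
    l2 ((Bᵀ * B)⁻¹.mulVec (Bᵀ.mulVec v)) ≤ Real.sqrt (opNorm2 (Bᵀ * B)⁻¹) * l2 v := by
  set G := Bᵀ * B with hG
  set P := G⁻¹ with hP
  set w := P.mulVec (Bᵀ.mulVec v) with hw
  have hGsym : Gᵀ = G := by rw [hG, Matrix.transpose_mul, Matrix.transpose_transpose]
  have hPsym : Pᵀ = P := by rw [hP, Matrix.transpose_nonsing_inv, hGsym]
  have hPG : ∀ z : κ → ℝ, P.mulVec (G.mulVec z) = z := by
    intro z
    rw [Matrix.mulVec_mulVec, Matrix.nonsing_inv_mul _ hinv, Matrix.one_mulVec]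
  have hGP : ∀ z : κ → ℝ, G.mulVec (P.mulVec z) = z := by
    intro z
    rw [Matrix.mulVec_mulVec, Matrix.mul_nonsing_inv _ hinv, Matrix.one_mulVec]
  have quad : ∀ z : κ → ℝ, z ⬝ᵥ G.mulVec z = l2 (B.mulVec z) ^ 2 := by
    intro z
    rw [hG, ← Matrix.mulVec_mulVec, Matrix.dotProduct_mulVec, ← Matrix.mulVec_transpose,
      Matrix.transpose_transpose, dot_self_eq_sq_l2]
  have hpsd : ∀ z : κ → ℝ, 0 ≤ z ⬝ᵥ P.mulVec z := by
    intro z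
    have h1 : z = G.mulVec (P.mulVec z) := (hGP z).symm
    calc (0:ℝ) ≤ l2 (B.mulVec (P.mulVec z)) ^ 2 := sq_nonneg _
    _ = P.mulVec z ⬝ᵥ G.mulVec (P.mulVec z) := (quad _).symm
    _ = P.mulVec z ⬝ᵥ z := by rw [hGP]
    _ = z ⬝ᵥ P.mulVec z := dotProduct_comm _ _
  have hGw : G.mulVec w = Bᵀ.mulVec v := hGP (Bᵀ.mulVec v)
  set t := l2 (B.mulVec w) with htdef
  have ht0 : 0 ≤ t := l2_nonneg _
  have ht2 : w ⬝ᵥ G.mulVec w = t ^ 2 := quad w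
  have htv : t ≤ l2 v := by
    have h1 : t ^ 2 ≤ t * l2 v := by
      calc t ^ 2 = w ⬝ᵥ G.mulVec w := ht2.symm
      _ = w ⬝ᵥ Bᵀ.mulVec v := by rw [hGw]
      _ = B.mulVec w ⬝ᵥ v := by
          rw [Matrix.dotProduct_mulVec, ← Matrix.mulVec_transpose, Matrix.transpose_transpose]
      _ ≤ l2 (B.mulVec w) * l2 v := dot_le_l2 _ _
    nlinarith [l2_nonneg v]
  have hcs := psd_cs P hPsym hpsd w (G.mulVec w)
  rw [hPG w] at hcs
  have h1 : w ⬝ᵥ w = l2 w ^ 2 := dot_self_eq_sq_l2 w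
  have h2 : w ⬝ᵥ P.mulVec w ≤ l2 w * (opNorm2 P * l2 w) :=
    le_trans (dot_le_l2 _ _) (mul_le_mul_of_nonneg_left (l2_mulVec_le_opNorm2 P w) (l2_nonneg w))
  have h3 : G.mulVec w ⬝ᵥ w = t ^ 2 := by
    rw [dotProduct_comm, ht2]
  rw [h1, h3] at hcs
  -- hcs : (l2 w ^ 2) ^ 2 ≤ (w ⬝ᵥ P.mulVec w) * t ^ 2
  have hsq : l2 w ^ 2 ≤ opNorm2 P * t ^ 2 := by
    by_cases hw0 : l2 w = 0
    · rw [hw0]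
      simpa using mul_nonneg (opNorm2_nonneg P) (sq_nonneg t)
    · have hwpos : 0 < l2 w := (l2_nonneg w).lt_of_ne (Ne.symm hw0)
      have h4 : l2 w ^ 2 * l2 w ^ 2 ≤ (opNorm2 P * t ^ 2) * (l2 w ^ 2) := by
        nlinarith [mul_le_mul_of_nonneg_right h2 (sq_nonneg t)]
      exact le_of_mul_le_mul_right h4 (pow_pos hwpos 2)
  have : l2 w ≤ Real.sqrt (opNorm2 P * t ^ 2) :=
    (Real.le_sqrt (l2_nonneg w) (mul_nonneg (opNorm2_nonneg P) (sq_nonneg t))).2 hsq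
  calc l2 w ≤ Real.sqrt (opNorm2 P * t ^ 2) := this
  _ = Real.sqrt (opNorm2 P) * t := by
      rw [Real.sqrt_mul (opNorm2_nonneg P), Real.sqrt_sq ht0]
  _ ≤ Real.sqrt (opNorm2 P) * l2 v :=
      mul_le_mul_of_nonneg_left htv (Real.sqrt_nonneg _)

lemma l2_neg (x : ι → ℝ) : l2 (-x) = l2 x := by simp [l2]

lemma rsign_mul_self (r : ℝ) : Real.sign r * r = |r| := by
  rcases lt_trichotomy r 0 with h|h|h <;>
    simp [Real.sign, h, abs_of_neg, abs_of_pos, h.not_gt] <;> ring_nf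

lemma sign_abs_le (r : ℝ) : |Real.sign r| ≤ 1 := by
  rcases lt_trichotomy r 0 with h|h|h <;> simp [Real.sign, h, h.not_gt]


/-- Proposition 1: ℓ² error bound for ℓ¹ minimizers when `IC(x⁰) < 1`. -/
theorem l2_error_bound {n m : ℕ} (A : Matrix (Fin n) (Fin m) ℝ)
    (x0 xs : Fin m → ℝ) (b y : Fin n → ℝ) (ε : ℝ)
    (I : Finset (Fin m)) (hI : ∀ i, i ∈ I ↔ x0 i ≠ 0)
    (hinv : IsUnit (gram A I).det) (hIC : IC A I x0 < 1)
    (hy : y = A.mulVec x0 + b) (hb : l2 b ≤ ε)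
    (hfeas : l2 (A.mulVec xs - y) ≤ ε)
    (hmin : ∀ x : Fin m → ℝ, l2 (A.mulVec x - y) ≤ ε → l1 xs ≤ l1 x) :
    l2 (xs - x0) ≤
      2 * ε * (Real.sqrt (opNorm2 ((gram A I)⁻¹)) +
        l2 (dvec A I x0) / (1 - IC A I x0) *
          (Real.sqrt (opNorm2 ((gram A I)⁻¹)) * norm12 (colSub A Iᶜ) + 1)) := by
  classical
  set d : Fin n → ℝ := dvec A I x0 with hd
  set e : Fin m → ℝ := xs - x0 with he
  have hesub : ∀ j, e j = xs j - x0 j := fun j => rfl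
  have hx0off : ∀ j, j ∉ I → x0 j = 0 := by
    intro j hj
    by_contra hne
    exact hj ((hI j).2 hne)
  have hε : 0 ≤ ε := le_trans (l2_nonneg b) hb
  have hfin : {y | ∃ j ∉ I, y = |∑ i, A i j * dvec A I x0 i|}.Finite := by
    apply Set.Finite.subset (Set.finite_range (fun j : Fin m => |∑ i, A i j * dvec A I x0 i|))
    rintro z ⟨j, hj, rfl⟩
    exact ⟨j, rfl⟩
  have hICnn : 0 ≤ IC A I x0 := by
    rcases Set.eq_empty_or_nonempty {y | ∃ j ∉ I, y = |∑ i, A i j * dvec A I x0 i|} with hS | hS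
    · rw [IC, hS, Real.sSup_empty]
    · obtain ⟨z, j, hj, hz⟩ := hS
      refine le_trans (show (0:ℝ) ≤ z by rw [hz]; exact abs_nonneg _) ?_
      exact le_csSup hfin.bddAbove ⟨j, hj, hz⟩
  have hICpos : 0 < 1 - IC A I x0 := by linarith
  -- ‖Ae‖ ≤ 2ε
  have hAe : l2 (A.mulVec e) ≤ 2 * ε := by
    have heq : A.mulVec e = (A.mulVec xs - y) + b := by
      funext i
      rw [he, hy]
      simp only [Matrix.mulVec, dotProduct, Pi.sub_apply, Pi.add_apply, mul_sub]
      rw [Finset.sum_sub_distrib]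
      ring
    calc l2 (A.mulVec e) ≤ l2 (A.mulVec xs - y) + l2 b := heq ▸ l2_add_le _ _
    _ ≤ ε + ε := add_le_add hfeas hb
    _ = 2 * ε := by ring
  -- x0 is feasible, so l1 xs ≤ l1 x0
  have hxs1 : l1 xs ≤ l1 x0 := by
    apply hmin
    have : A.mulVec x0 - y = -b := by rw [hy]; funext i; simp
    rw [this, l2_neg]
    exact hb
  -- the dual certificate
  have hcert : ∀ j ∈ I, ∑ i, A i j * d i = Real.sign (x0 j) := by
    intro j hj
    have hmv : (colSub A I)ᵀ.mulVec d = signI x0 I := by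
      rw [hd, dvec, Matrix.mulVec_mulVec, Matrix.mulVec_mulVec]
      rw [show (colSub A I)ᵀ * colSub A I = gram A I from rfl]
      rw [Matrix.mul_nonsing_inv _ hinv, Matrix.one_mulVec]
    have := congrFun hmv ⟨j, hj⟩
    simpa [Matrix.mulVec, dotProduct, Matrix.transpose_apply, colSub, signI] using this
  -- IC bounds
  have hICb : ∀ j, j ∉ I → |∑ i, A i j * d i| ≤ IC A I x0 := by
    intro j hj
    exact le_csSup hfin.bddAbove ⟨j, hj, by rw [hd]⟩
  -- step 5 : bound on the off-support ℓ¹ mass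
  set c1 : ℝ := ∑ j ∈ Iᶜ, |e j| with hc1def
  have hc1nn : 0 ≤ c1 := Finset.sum_nonneg fun j _ => abs_nonneg _
  have hl1x0 : ∑ j ∈ I, |x0 j| = l1 x0 := by
    rw [l1, ← Finset.sum_add_sum_compl I]
    have : ∑ j ∈ Iᶜ, |x0 j| = 0 :=
      Finset.sum_eq_zero fun j hj => by rw [hx0off j (Finset.mem_compl.1 hj), abs_zero]
    rw [this, add_zero]
  have hxs_split : l1 xs = ∑ j ∈ I, |xs j| + c1 := by
    rw [l1, ← Finset.sum_add_sum_compl I, hc1def]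
    congr 1
    refine Finset.sum_congr rfl fun j hj => ?_
    rw [hesub, hx0off j (Finset.mem_compl.1 hj), sub_zero]
  have hsgn : ∑ j ∈ I, Real.sign (x0 j) * xs j ≤ ∑ j ∈ I, |xs j| := by
    refine Finset.sum_le_sum fun j _ => ?_
    refine le_trans (le_abs_self _) ?_
    rw [abs_mul]
    exact mul_le_of_le_one_left (abs_nonneg _) (sign_abs_le _)
  have hsgn2 : ∑ j ∈ I, Real.sign (x0 j) * xs j
      = l1 x0 + ∑ j ∈ I, Real.sign (x0 j) * e j := by
    rw [← hl1x0, ← Finset.sum_add_distrib]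
    refine Finset.sum_congr rfl fun j _ => ?_
    rw [← rsign_mul_self (x0 j), hesub]
    ring
  -- rewrite the inner sum via the certificate
  have hswap : ∑ j ∈ I, Real.sign (x0 j) * e j
      = ∑ i, d i * (∑ j ∈ I, A i j * e j) := by
    have hst : ∀ j ∈ I, Real.sign (x0 j) * e j = ∑ i, d i * (A i j * e j) := by
      intro j hj
      rw [← hcert j hj, Finset.sum_mul]
      exact Finset.sum_congr rfl fun i _ => by ring
    rw [Finset.sum_congr rfl hst, Finset.sum_comm]
    exact Finset.sum_congr rfl fun i _ => (Finset.mul_sum _ _ _).symm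
  have hudecomp : ∀ i, ∑ j ∈ I, A i j * e j
      = A.mulVec e i - ∑ j ∈ Iᶜ, A i j * e j := by
    intro i
    rw [eq_sub_iff_add_eq, Finset.sum_add_sum_compl]
    rfl
  have h4 : |∑ i, d i * A.mulVec e i| ≤ l2 d * (2 * ε) :=
    le_trans (cs_abs d (A.mulVec e)) (mul_le_mul_of_nonneg_left hAe (l2_nonneg d))
  have h5 : |∑ i, d i * ∑ j ∈ Iᶜ, A i j * e j| ≤ IC A I x0 * c1 := by
    have hre : ∑ i, d i * ∑ j ∈ Iᶜ, A i j * e j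
        = ∑ j ∈ Iᶜ, (∑ i, A i j * d i) * e j := by
      have hst : ∀ i ∈ Finset.univ (α := Fin n), d i * ∑ j ∈ Iᶜ, A i j * e j
          = ∑ j ∈ Iᶜ, d i * (A i j * e j) := fun i _ => Finset.mul_sum _ _ _
      rw [Finset.sum_congr rfl hst, Finset.sum_comm]
      refine Finset.sum_congr rfl fun j _ => ?_
      rw [Finset.sum_mul]
      exact Finset.sum_congr rfl fun i _ => by ring
    rw [hre, hc1def, Finset.mul_sum]
    refine le_trans (Finset.abs_sum_le_sum_abs _ _) (Finset.sum_le_sum fun j hj => ?_)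
    rw [abs_mul]
    exact mul_le_mul_of_nonneg_right (hICb j (Finset.mem_compl.1 hj)) (abs_nonneg _)
  -- combine
  have hkey : (1 - IC A I x0) * c1 ≤ 2 * ε * l2 d := by
    have e1 : ∑ j ∈ I, Real.sign (x0 j) * e j
        = ∑ i, d i * A.mulVec e i - ∑ i, d i * ∑ j ∈ Iᶜ, A i j * e j := by
      rw [hswap, ← Finset.sum_sub_distrib]
      refine Finset.sum_congr rfl fun i _ => ?_
      rw [hudecomp i]
      ring
    have e2 : l1 x0 + (∑ i, d i * A.mulVec e i - ∑ i, d i * ∑ j ∈ Iᶜ, A i j * e j) + c1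
        ≤ l1 x0 := by
      calc l1 x0 + (∑ i, d i * A.mulVec e i - ∑ i, d i * ∑ j ∈ Iᶜ, A i j * e j) + c1
          = ∑ j ∈ I, Real.sign (x0 j) * xs j + c1 := by rw [hsgn2, e1]
      _ ≤ ∑ j ∈ I, |xs j| + c1 := add_le_add_left hsgn _
      _ = l1 xs := hxs_split.symm
      _ ≤ l1 x0 := hxs1
    have e3 : -(l2 d * (2 * ε)) ≤ ∑ i, d i * A.mulVec e i := neg_le_of_abs_le h4
    have e4 : ∑ i, d i * ∑ j ∈ Iᶜ, A i j * e j ≤ IC A I x0 * c1 := le_of_abs_le h5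
    nlinarith [e2, e3, e4]
  have hc1 : c1 ≤ 2 * ε * l2 d / (1 - IC A I x0) := by
    rw [le_div_iff₀ hICpos]
    linarith [hkey]
  -- step 6 : bound on the support part
  set B : Matrix (Fin n) {j // j ∈ I} ℝ := colSub A I with hB
  set Bc : Matrix (Fin n) {j // j ∈ Iᶜ} ℝ := colSub A Iᶜ with hBc
  set eI : {j // j ∈ I} → ℝ := fun j => e j with heI
  set ec : {j // j ∈ Iᶜ} → ℝ := fun j => e j with hec
  have hl1ec : l1 ec = c1 := by
    rw [l1, hc1def]
    exact Finset.sum_coe_sort Iᶜ (fun j => |e j|)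
  have hgB : gram A I = Bᵀ * B := rfl
  have hsplitA : A.mulVec e = B.mulVec eI + Bc.mulVec ec := by
    funext i
    simp only [Pi.add_apply, Matrix.mulVec, dotProduct]
    rw [show (∑ j : {j // j ∈ I}, B i j * eI j) = ∑ j ∈ I, A i j * e j from
        Finset.sum_coe_sort I (fun j => A i j * e j),
      show (∑ j : {j // j ∈ Iᶜ}, Bc i j * ec j) = ∑ j ∈ Iᶜ, A i j * e j from
        Finset.sum_coe_sort Iᶜ (fun j => A i j * e j),
      Finset.sum_add_sum_compl]
  set v2 : Fin n → ℝ := A.mulVec e - Bc.mulVec ec with hv2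
  have hBeI : B.mulVec eI = v2 := by
    rw [hv2, hsplitA]
    abel
  have heIeq : eI = (gram A I)⁻¹.mulVec (Bᵀ.mulVec v2) := by
    have h1 : Bᵀ.mulVec v2 = (gram A I).mulVec eI := by
      rw [← hBeI, Matrix.mulVec_mulVec, hgB]
    rw [h1, Matrix.mulVec_mulVec, Matrix.nonsing_inv_mul _ hinv, Matrix.one_mulVec]
  have hspec : l2 eI ≤ Real.sqrt (opNorm2 ((gram A I)⁻¹)) * l2 v2 := by
    rw [heIeq, hgB]
    exact spec_bound B (by rwa [← hgB]) v2
  have hv2b : l2 v2 ≤ 2 * ε + norm12 Bc * c1 := by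
    have hveq : v2 = A.mulVec e + -(Bc.mulVec ec) := by
      rw [hv2, sub_eq_add_neg]
    calc l2 v2 ≤ l2 (A.mulVec e) + l2 (-(Bc.mulVec ec)) := hveq ▸ l2_add_le _ _
    _ = l2 (A.mulVec e) + l2 (Bc.mulVec ec) := by rw [l2_neg]
    _ ≤ 2 * ε + norm12 Bc * l1 ec := add_le_add hAe (l2_mulVec_le_norm12 _ _)
    _ = 2 * ε + norm12 Bc * c1 := by rw [hl1ec]
  have hesq : l2 e ^ 2 = l2 eI ^ 2 + l2 ec ^ 2 := by
    rw [sq_l2, sq_l2, sq_l2,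
      show (∑ j : {j // j ∈ I}, eI j ^ 2) = ∑ j ∈ I, e j ^ 2 from
        Finset.sum_coe_sort I (fun j => e j ^ 2),
      show (∑ j : {j // j ∈ Iᶜ}, ec j ^ 2) = ∑ j ∈ Iᶜ, e j ^ 2 from
        Finset.sum_coe_sort Iᶜ (fun j => e j ^ 2),
      Finset.sum_add_sum_compl]
  have hsplit2 : l2 e ≤ l2 eI + l2 ec := by
    have h1 : l2 e ^ 2 ≤ (l2 eI + l2 ec) ^ 2 := by
      rw [hesq]
      nlinarith [mul_nonneg (l2_nonneg eI) (l2_nonneg ec)]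
    calc l2 e = Real.sqrt (l2 e ^ 2) := (Real.sqrt_sq (l2_nonneg e)).symm
    _ ≤ Real.sqrt ((l2 eI + l2 ec) ^ 2) := Real.sqrt_le_sqrt h1
    _ = l2 eI + l2 ec := Real.sqrt_sq (add_nonneg (l2_nonneg _) (l2_nonneg _))
  have hec2 : l2 ec ≤ c1 := hl1ec ▸ l2_le_l1 ec
  -- final arithmetic
  set P := Real.sqrt (opNorm2 ((gram A I)⁻¹)) with hP
  set ν := norm12 Bc with hν
  have hPnn : 0 ≤ P := Real.sqrt_nonneg _
  have hνnn : 0 ≤ ν := norm12_nonneg Bc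
  have hfinal : l2 e ≤ P * (2 * ε + ν * c1) + c1 :=
    le_trans hsplit2 (add_le_add (le_trans hspec (mul_le_mul_of_nonneg_left hv2b hPnn)) hec2)
  have hfinal2 : l2 e ≤ 2 * ε * P + (P * ν + 1) * c1 := by
    calc l2 e ≤ P * (2 * ε + ν * c1) + c1 := hfinal
    _ = 2 * ε * P + (P * ν + 1) * c1 := by ring
  have hmono : (P * ν + 1) * c1 ≤ (P * ν + 1) * (2 * ε * l2 d / (1 - IC A I x0)) :=
    mul_le_mul_of_nonneg_left hc1 (by positivity)
  have hring : 2 * ε * (P + l2 d / (1 - IC A I x0) * (P * ν + 1))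
      = 2 * ε * P + (P * ν + 1) * (2 * ε * l2 d / (1 - IC A I x0)) := by
    ring
  rw [hring]
  linarith [hfinal2, hmono]
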